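/- For 0 < β ≤ α < 1 and f(x) = |x|^α, the left Caputo fractional derivative of order β of f with base point a ≠ 0 satisfies C_{a⁺}^β f(a) = 0 (i.e. the limit as x → a⁺ of C_{a⁺}^β f(x) is 0) whenever β < α or a ≠ 0, while for base point a = 0 and β = α one has lim_{x→0⁺} C_{0⁺}^α f(x) = Γ(α+1). -/

import Mathlib

open Filter Topology MeasureTheory intervalIntegral

set_option maxHeartbeats 1000000

/-- Left Caputo fractional derivative of order `β ∈ (0,1)` with base point `a`:
`C_{a⁺}^β f(x) = d/dx ( (1/Γ(1-β)) ∫_a^x (f(t) - f(a)) (x-t)^{-β} dt )`. -/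
noncomputable def caputo (β a : ℝ) (f : ℝ → ℝ) (x : ℝ) : ℝ :=
  deriv (fun y => (Real.Gamma (1 - β))⁻¹ * ∫ t in a..y, (f t - f a) * (y - t) ^ (-β)) x

lemma ker_int {β : ℝ} (hβ : β < 1) :
    IntervalIntegrable (fun s : ℝ => (1 - s) ^ (-β)) volume 0 1 := by
  have h := (intervalIntegral.intervalIntegrable_rpow' (a := 0) (b := 1) (r := -β)
    (by linarith)).comp_sub_left 1
  simpa using h.symm

lemma beta_real {u v : ℝ} (hu : 0 < u) (hv : 0 < v) :
    Real.Gamma u * Real.Gamma v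
      = Real.Gamma (u + v) * ∫ s in (0:ℝ)..1, s ^ (u - 1) * (1 - s) ^ (v - 1) := by
  have h := Complex.Gamma_mul_Gamma_eq_betaIntegral (s := u) (t := v)
    (by simpa using hu) (by simpa using hv)
  have hB : Complex.betaIntegral u v
      = ((∫ s in (0:ℝ)..1, s ^ (u - 1) * (1 - s) ^ (v - 1) : ℝ) : ℂ) := by
    rw [Complex.betaIntegral, ← intervalIntegral.integral_ofReal]
    apply intervalIntegral.integral_congr
    intro s hs
    rw [Set.uIcc_of_le (by norm_num : (0:ℝ) ≤ 1)] at hs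
    dsimp only
    rw [Complex.ofReal_mul, Complex.ofReal_cpow hs.1, Complex.ofReal_cpow (by linarith [hs.2] : (0:ℝ) ≤ 1 - s)]
    push_cast
    ring
  rw [hB] at h
  have h2 : ((u:ℂ) + v) = ((u + v : ℝ) : ℂ) := by push_cast; ring
  rw [h2, Complex.Gamma_ofReal, Complex.Gamma_ofReal, Complex.Gamma_ofReal] at h
  exact_mod_cast h

lemma caputo_subst {β : ℝ} (g : ℝ → ℝ) {a y : ℝ} (h : a < y) :
    (∫ t in a..y, g t * (y - t) ^ (-β))
      = (y - a) ^ (1 - β) * ∫ s in (0:ℝ)..1, g (a + s * (y - a)) * (1 - s) ^ (-β) := by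
  have hya : (0:ℝ) < y - a := sub_pos.2 h
  have h1 := intervalIntegral.integral_comp_mul_add (a := 0) (b := 1)
    (fun t => g t * (y - t) ^ (-β)) hya.ne' a
  simp only [mul_zero, zero_add, mul_one, sub_add_cancel, smul_eq_mul] at h1
  have h2 : (∫ s in (0:ℝ)..1, g ((y - a) * s + a) * (y - ((y - a) * s + a)) ^ (-β))
      = (y - a) ^ (-β) * ∫ s in (0:ℝ)..1, g (a + s * (y - a)) * (1 - s) ^ (-β) := by
    rw [← intervalIntegral.integral_const_mul]
    apply intervalIntegral.integral_congr
    intro s hs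
    dsimp only
    rw [Set.uIcc_of_le (by norm_num : (0:ℝ) ≤ 1)] at hs
    have hs1 : (0:ℝ) ≤ 1 - s := by linarith [hs.2]
    have harg : y - ((y - a) * s + a) = (1 - s) * (y - a) := by ring
    have harg2 : (y - a) * s + a = a + s * (y - a) := by ring
    rw [harg, harg2, Real.mul_rpow hs1 hya.le]
    ring
  rw [h2] at h1
  have h3 : (y - a) ^ (1 - β) = (y - a) * (y - a) ^ (-β) := by
    rw [show (1:ℝ) - β = 1 + (-β) by ring, Real.rpow_add hya, Real.rpow_one]
  have hy0 : y - a ≠ 0 := hya.ne'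
  field_simp at h1
  rw [h3]
  rw [mul_assoc]
  rw [← h1]
  ring

lemma caputo_zero_eq {α β : ℝ} (hα0 : 0 < α) {x : ℝ} (hx : 0 < x) :
    caputo β 0 (fun t => |t| ^ α) x
      = (Real.Gamma (1 - β))⁻¹ *
        ((∫ s in (0:ℝ)..1, s ^ α * (1 - s) ^ (-β)) * ((α - β + 1) * x ^ (α - β))) := by
  set B := ∫ s in (0:ℝ)..1, s ^ α * (1 - s) ^ (-β) with hB
  have key : ∀ y : ℝ, 0 < y →
      ((Real.Gamma (1 - β))⁻¹ * ∫ t in (0:ℝ)..y, (|t| ^ α - |(0:ℝ)| ^ α) * (y - t) ^ (-β))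
        = (Real.Gamma (1 - β))⁻¹ * (B * y ^ (α - β + 1)) := by
    intro y hy
    rw [caputo_subst (fun t => |t| ^ α - |(0:ℝ)| ^ α) hy]
    have h0 : |(0:ℝ)| ^ α = 0 := by rw [abs_zero, Real.zero_rpow hα0.ne']
    have hint : (∫ s in (0:ℝ)..1, (|0 + s * (y - 0)| ^ α - |(0:ℝ)| ^ α) * (1 - s) ^ (-β))
        = y ^ α * B := by
      rw [hB, ← intervalIntegral.integral_const_mul]
      apply intervalIntegral.integral_congr
      intro s hs
      dsimp only
      rw [Set.uIcc_of_le (by norm_num : (0:ℝ) ≤ 1)] at hs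
      have habs : |0 + s * (y - 0)| = s * y := by
        rw [zero_add, sub_zero, abs_of_nonneg (mul_nonneg hs.1 hy.le)]
      rw [habs, h0, sub_zero, Real.mul_rpow hs.1 hy.le]
      ring
    rw [hint, sub_zero]
    congr 1
    rw [show α - β + 1 = (1 - β) + α by ring, Real.rpow_add hy]
    ring
  have hev : (fun y => (Real.Gamma (1 - β))⁻¹ *
        ∫ t in (0:ℝ)..y, ((fun u : ℝ => |u| ^ α) t - (fun u : ℝ => |u| ^ α) 0) * (y - t) ^ (-β))
      =ᶠ[𝓝 x] fun y => (Real.Gamma (1 - β))⁻¹ * (B * y ^ (α - β + 1)) := by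
    filter_upwards [Ioi_mem_nhds hx] with y hy
    exact key y hy
  rw [caputo, hev.deriv_eq]
  have hd : HasDerivAt (fun y : ℝ => (Real.Gamma (1 - β))⁻¹ * (B * y ^ (α - β + 1)))
      ((Real.Gamma (1 - β))⁻¹ * (B * ((α - β + 1) * x ^ (α - β + 1 - 1)))) x :=
    HasDerivAt.const_mul _ (HasDerivAt.const_mul B
      (Real.hasDerivAt_rpow_const (p := α - β + 1) (Or.inl hx.ne')))
  rw [hd.deriv, show α - β + 1 - 1 = α - β by ring]

lemma hasDerivAt_abs_rpow' {α : ℝ} (hα0 : 0 < α) {t : ℝ} (ht : t ≠ 0) :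
    HasDerivAt (fun u : ℝ => |u| ^ α) (Real.sign t * (α * |t| ^ (α - 1))) t := by
  rcases ht.lt_or_gt with h | h
  · have hev : (fun u : ℝ => (-u) ^ α) =ᶠ[𝓝 t] fun u : ℝ => |u| ^ α := by
      filter_upwards [Iio_mem_nhds h] with u hu
      rw [abs_of_neg hu]
    have hd : HasDerivAt (fun u : ℝ => (-u) ^ α) (-1 * α * (-t) ^ (α - 1)) t :=
      (hasDerivAt_neg t).rpow_const (Or.inl (neg_ne_zero.2 ht))
    have := hd.congr_of_eventuallyEq hev.symm
    refine this.congr_deriv ?_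
    rw [Real.sign_of_neg h, abs_of_neg h]
    ring
  · have hev : (fun u : ℝ => u ^ α) =ᶠ[𝓝 t] fun u : ℝ => |u| ^ α := by
      filter_upwards [Ioi_mem_nhds h] with u hu
      rw [abs_of_pos hu]
    have hd : HasDerivAt (fun u : ℝ => u ^ α) (α * t ^ (α - 1)) t :=
      Real.hasDerivAt_rpow_const (Or.inl ht)
    have := hd.congr_of_eventuallyEq hev.symm
    refine this.congr_deriv ?_
    rw [Real.sign_of_pos h, abs_of_pos h]
    ring


lemma hasDerivAt_integral_wrapper (g g' : ℝ → ℝ → ℝ) (x : ℝ) {ε : ℝ} (hε : 0 < ε)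
    (μ : MeasureTheory.Measure ℝ) (bound : ℝ → ℝ)
    (h1 : ∀ᶠ y in 𝓝 x, AEStronglyMeasurable (g y) μ)
    (h2 : Integrable (g x) μ)
    (h3 : AEStronglyMeasurable (g' x) μ)
    (h4 : ∀ᵐ s ∂μ, ∀ y ∈ Metric.ball x ε, ‖g' y s‖ ≤ bound s)
    (h5 : Integrable bound μ)
    (h6 : ∀ᵐ s ∂μ, ∀ y ∈ Metric.ball x ε, HasDerivAt (g · s) (g' y s) y) :
    HasDerivAt (fun y => ∫ s, g y s ∂μ) (∫ s, g' x s ∂μ) x :=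
  (hasDerivAt_integral_of_dominated_loc_of_deriv_le (Metric.ball_mem_nhds x hε) h1 h2 h3 h4 h5 h6).2

lemma caputo_nonzero {α β : ℝ} (hα0 : 0 < α) (hα1 : α < 1) (hβ0 : 0 < β) (hβ1 : β < 1)
    {a : ℝ} (ha : a ≠ 0) :
    Tendsto (caputo β a (fun x => |x| ^ α)) (𝓝[>] a) (𝓝 0) := by
  set f : ℝ → ℝ := fun u => |u| ^ α with hf
  have ha0 : 0 < |a| := abs_pos.2 ha
  set δ : ℝ := |a| / 2 with hδ
  have hδ0 : 0 < δ := by positivity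
  set M : ℝ := α * (|a| / 2) ^ (α - 1) with hM
  have hM0 : 0 ≤ M := by positivity
  -- membership facts in the interval [a, a+δ)
  have hmem : ∀ t ∈ Set.Ico a (a + δ), t ≠ 0 ∧ |a| / 2 ≤ |t| ∧ Real.sign t = Real.sign a := by
    intro t ht
    obtain ⟨ht1, ht2⟩ := ht
    rcases ha.lt_or_gt with h | h
    · have habs : |a| = -a := abs_of_neg h
      rw [hδ, habs] at ht2
      have ht0 : t < 0 := by linarith
      refine ⟨ht0.ne, ?_, ?_⟩
      · rw [abs_of_neg ht0, habs]; linarith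
      · rw [Real.sign_of_neg ht0, Real.sign_of_neg h]
    · have ht0 : 0 < t := lt_of_lt_of_le h ht1
      refine ⟨ht0.ne', ?_, ?_⟩
      · rw [abs_of_pos ht0, abs_of_pos h]; linarith
      · rw [Real.sign_of_pos ht0, Real.sign_of_pos h]
  -- bound on the derivative
  have hDbound : ∀ t : ℝ, |a| / 2 ≤ |t| → |Real.sign t * (α * |t| ^ (α - 1))| ≤ M := by
    intro t ht
    have h0 : (0:ℝ) < |a| / 2 := by positivity
    have h1 : |t| ^ (α - 1) ≤ (|a| / 2) ^ (α - 1) :=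
      Real.rpow_le_rpow_of_nonpos h0 ht (by linarith)
    have h2 : |Real.sign t| ≤ 1 := by
      rcases lt_trichotomy t 0 with h | h | h
      · rw [Real.sign_of_neg h]; norm_num
      · rw [h, Real.sign_zero]; norm_num
      · rw [Real.sign_of_pos h]; norm_num
    calc |Real.sign t * (α * |t| ^ (α - 1))|
        = |Real.sign t| * (α * |t| ^ (α - 1)) := by
          rw [abs_mul, abs_of_nonneg (by positivity : (0:ℝ) ≤ α * |t| ^ (α - 1))]
      _ ≤ 1 * (α * |t| ^ (α - 1)) :=
          mul_le_mul_of_nonneg_right h2 (by positivity)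
      _ = α * |t| ^ (α - 1) := one_mul _
      _ ≤ α * (|a| / 2) ^ (α - 1) := mul_le_mul_of_nonneg_left h1 hα0.le
  have hderiv : ∀ t ∈ Set.Ico a (a + δ),
      HasDerivAt f (Real.sign t * (α * |t| ^ (α - 1))) t :=
    fun t ht => hasDerivAt_abs_rpow' hα0 (hmem t ht).1
  -- Lipschitz estimate
  have hlip : ∀ u ∈ Set.Ico a (a + δ), |f u - f a| ≤ M * (u - a) := by
    intro u hu
    have haI : a ∈ Set.Ico a (a + δ) := ⟨le_refl _, by linarith⟩
    have h := Convex.norm_image_sub_le_of_norm_hasDerivWithin_le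
      (fun t ht => (hderiv t ht).hasDerivWithinAt)
      (fun t ht => by rw [Real.norm_eq_abs]; exact hDbound t (hmem t ht).2.1)
      (convex_Ico _ _) haI hu
    rw [Real.norm_eq_abs, Real.norm_eq_abs, abs_of_nonneg (by linarith [hu.1] : (0:ℝ) ≤ u - a)] at h
    exact h
  -- kernel facts
  set μ : Measure ℝ := volume.restrict (Set.Ioo (0:ℝ) 1) with hμ
  have hkerm : ∀ᵐ s ∂μ, s ∈ Set.Ioo (0:ℝ) 1 := ae_restrict_mem measurableSet_Ioo
  have hker_int : Integrable (fun s : ℝ => (1 - s) ^ (-β)) μ := by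
    have h1 : IntegrableOn (fun s : ℝ => (1 - s) ^ (-β)) (Set.Ioc 0 1) volume :=
      (intervalIntegrable_iff_integrableOn_Ioc_of_le zero_le_one).1 (ker_int hβ1)
    exact h1.mono_set Set.Ioo_subset_Ioc_self
  set Cκ : ℝ := ∫ s, (1 - s) ^ (-β) ∂μ with hCκ
  have hCκ0 : 0 ≤ Cκ := by
    rw [hCκ, hμ]
    apply setIntegral_nonneg measurableSet_Ioo
    intro s hs
    exact Real.rpow_nonneg (by linarith [hs.2]) _
  have hΓ : 0 < (Real.Gamma (1 - β))⁻¹ := inv_pos.2 (Real.Gamma_pos_of_pos (by linarith))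
  set K : ℝ := (Real.Gamma (1 - β))⁻¹ * ((1 - β) + 1) * (M * Cκ) with hK
  have hfc : Continuous f := continuous_abs.rpow_const fun _ => Or.inr hα0.le
  have hkc : ContinuousOn (fun s : ℝ => (1 - s) ^ (-β)) (Set.Ioo 0 1) :=
    (continuous_const.sub continuous_id).continuousOn.rpow_const
      (fun s hs => Or.inl (by simp only [Set.mem_Ioo] at hs; intro h; simp at h; linarith [hs.2]))
  -- main pointwise bound
  have main : ∀ x ∈ Set.Ioo a (a + δ), |caputo β a f x| ≤ K * (x - a) ^ (1 - β) := by
    intro x hx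
    have hxa : 0 < x - a := sub_pos.2 hx.1
    obtain ⟨ε, hε0, hball⟩ := Metric.isOpen_iff.1 isOpen_Ioo x hx
    set F : ℝ → ℝ → ℝ := fun y s => (f (a + s * (y - a)) - f a) * (1 - s) ^ (-β) with hF
    set G : ℝ → ℝ → ℝ :=
      fun y s => Real.sign a * (α * |a + s * (y - a)| ^ (α - 1)) * s * (1 - s) ^ (-β) with hG
    have hmem2 : ∀ y ∈ Metric.ball x ε, ∀ s ∈ Set.Ioo (0:ℝ) 1,
        a + s * (y - a) ∈ Set.Ico a (a + δ) := by
      intro y hy s hs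
      have hy' := hball hy
      constructor
      · have := mul_pos hs.1 (sub_pos.2 hy'.1)
        linarith
      · have h1 : s * (y - a) ≤ 1 * (y - a) :=
          mul_le_mul_of_nonneg_right hs.2.le (by linarith [hy'.1])
        have := hy'.2
        linarith
    have hxball : x ∈ Metric.ball x ε := Metric.mem_ball_self hε0
    have hF_meas : ∀ᶠ y in 𝓝 x, AEStronglyMeasurable (F y) μ := by
      refine Filter.Eventually.of_forall fun y => ?_
      exact (((hfc.comp (continuous_const.add (continuous_id.mul
        continuous_const))).sub continuous_const).continuousOn.mul hkc).aestronglyMeasurable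
        measurableSet_Ioo
    have hFxbound : ∀ᵐ s ∂μ, ‖F x s‖ ≤ M * (x - a) * ((1 - s) ^ (-β)) := by
      filter_upwards [hkerm] with s hs
      have ht := hmem2 x hxball s hs
      have hk0 : (0:ℝ) ≤ (1 - s) ^ (-β) := Real.rpow_nonneg (by linarith [hs.2]) _
      have heq : ‖F x s‖ = |f (a + s * (x - a)) - f a| * (1 - s) ^ (-β) := by
        rw [hF]
        rw [Real.norm_eq_abs, abs_mul, abs_of_nonneg hk0]
      rw [heq]
      have h2 : a + s * (x - a) - a = s * (x - a) := by ring
      have h3 : |f (a + s * (x - a)) - f a| ≤ M * (x - a) := by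
        have h4 := hlip _ ht
        rw [h2] at h4
        have h5 : 0 ≤ M * ((1 - s) * (x - a)) :=
          mul_nonneg hM0 (mul_nonneg (by linarith [hs.2]) hxa.le)
        nlinarith [h5]
      exact mul_le_mul_of_nonneg_right h3 hk0
    have hF_int : Integrable (F x) μ := by
      refine Integrable.mono' (hker_int.const_mul (M * (x - a))) ?_ hFxbound
      exact (((hfc.comp (continuous_const.add (continuous_id.mul
        continuous_const))).sub continuous_const).continuousOn.mul hkc).aestronglyMeasurable
        measurableSet_Ioo
    have hG_meas : AEStronglyMeasurable (G x) μ := by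
      have hbase : ContinuousOn (fun s : ℝ => |a + s * (x - a)| ^ (α - 1)) (Set.Ioo 0 1) := by
        apply ContinuousOn.rpow_const
          ((continuous_const.add (continuous_id.mul continuous_const)).abs.continuousOn)
        intro s hs
        exact Or.inl (abs_ne_zero.2 (hmem _ (hmem2 x hxball s hs)).1)
      exact (((continuousOn_const.mul (continuousOn_const.mul hbase)).mul
        continuousOn_id).mul hkc).aestronglyMeasurable measurableSet_Ioo
    have hG_bound : ∀ᵐ s ∂μ, ∀ y ∈ Metric.ball x ε, ‖G y s‖ ≤ M * ((1 - s) ^ (-β)) := by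
      filter_upwards [hkerm] with s hs y hy
      have ht := hmem2 y hy s hs
      have hk0 : (0:ℝ) ≤ (1 - s) ^ (-β) := Real.rpow_nonneg (by linarith [hs.2]) _
      have h1 : |Real.sign a * (α * |a + s * (y - a)| ^ (α - 1))| ≤ M := by
        rw [← (hmem _ ht).2.2]
        exact hDbound _ (hmem _ ht).2.1
      have hs01 : |s| ≤ 1 := by rw [abs_of_pos hs.1]; exact hs.2.le
      calc ‖G y s‖
          = |Real.sign a * (α * |a + s * (y - a)| ^ (α - 1))| * |s| * ((1 - s) ^ (-β)) := by
            rw [hG, Real.norm_eq_abs, abs_mul, abs_mul, abs_of_nonneg hk0]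
        _ ≤ M * 1 * ((1 - s) ^ (-β)) := by
            apply mul_le_mul_of_nonneg_right _ hk0
            exact mul_le_mul h1 hs01 (abs_nonneg _) hM0
        _ = M * ((1 - s) ^ (-β)) := by ring
    have hG_diff : ∀ᵐ s ∂μ, ∀ y ∈ Metric.ball x ε, HasDerivAt (F · s) (G y s) y := by
      filter_upwards [hkerm] with s hs y hy
      have ht := hmem2 y hy s hs
      have htne := (hmem _ ht).1
      have inner : HasDerivAt (fun y : ℝ => a + s * (y - a)) s y := by
        simpa using (((hasDerivAt_id y).sub_const a).const_mul s).const_add a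
      have outer := hasDerivAt_abs_rpow' hα0 htne
      have hcomp := HasDerivAt.comp y outer inner
      have h2 := (hcomp.sub_const (f a)).mul_const ((1 - s) ^ (-β))
      rw [(hmem _ ht).2.2] at h2
      exact h2
    have hΨ := hasDerivAt_integral_wrapper F G x hε0 μ (fun s => M * ((1 - s) ^ (-β)))
      hF_meas hF_int hG_meas hG_bound (hker_int.const_mul M) hG_diff
    set Ψ' : ℝ := ∫ s, G x s ∂μ with hΨ'
    have hIker : ∀ c : ℝ, (∫ s, c * ((1 - s) ^ (-β)) ∂μ) = c * Cκ := by
      intro c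
      rw [hCκ, MeasureTheory.integral_const_mul]
    have hΨ'b : |Ψ'| ≤ M * Cκ := by
      have h1 : ∀ᵐ s ∂μ, ‖G x s‖ ≤ M * ((1 - s) ^ (-β)) := by
        filter_upwards [hG_bound] with s hs
        exact hs x hxball
      have := norm_integral_le_of_norm_le (hker_int.const_mul M) h1
      rw [hIker] at this
      rw [hΨ']
      exact this
    have hIxb : |∫ s, F x s ∂μ| ≤ M * (x - a) * Cκ := by
      have := norm_integral_le_of_norm_le (hker_int.const_mul (M * (x - a))) hFxbound
      rw [hIker] at this
      exact this
    -- derivative of the power factor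
    have hP : HasDerivAt (fun y : ℝ => (y - a) ^ (1 - β))
        (1 * (1 - β) * (x - a) ^ (1 - β - 1)) x :=
      ((hasDerivAt_id x).sub_const a).rpow_const (Or.inl hxa.ne')
    have hprod := hP.mul hΨ
    have hfull := HasDerivAt.const_mul (Real.Gamma (1 - β))⁻¹ hprod
    have hev : (fun y => (Real.Gamma (1 - β))⁻¹ * ∫ t in a..y, (f t - f a) * (y - t) ^ (-β))
        =ᶠ[𝓝 x] fun y => (Real.Gamma (1 - β))⁻¹ * ((y - a) ^ (1 - β) * ∫ s, F y s ∂μ) := by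
      filter_upwards [Ioi_mem_nhds hx.1] with y hy
      rw [caputo_subst (fun t => f t - f a) hy]
      congr 1
      congr 1
      rw [intervalIntegral.integral_of_le zero_le_one, MeasureTheory.integral_Ioc_eq_integral_Ioo]
    have hC := hfull.congr_of_eventuallyEq hev
    have hcap : caputo β a f x
        = (Real.Gamma (1 - β))⁻¹ * (1 * (1 - β) * (x - a) ^ (1 - β - 1) * (∫ s, F x s ∂μ)
            + (x - a) ^ (1 - β) * Ψ') := by
      rw [caputo]
      exact hC.deriv
    rw [hcap]
    have hpow : (x - a) ^ (1 - β - 1) * (x - a) = (x - a) ^ (1 - β) := by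
      rw [show (1:ℝ) - β = (1 - β - 1) + 1 by ring, Real.rpow_add hxa, Real.rpow_one]
      rw [show (1:ℝ) - β - 1 + 1 - 1 = 1 - β - 1 by ring]
    have hP1 : (0:ℝ) < (x - a) ^ (1 - β - 1) := Real.rpow_pos_of_pos hxa _
    have hP2 : (0:ℝ) < (x - a) ^ (1 - β) := Real.rpow_pos_of_pos hxa _
    calc |(Real.Gamma (1 - β))⁻¹ * (1 * (1 - β) * (x - a) ^ (1 - β - 1) * (∫ s, F x s ∂μ)
            + (x - a) ^ (1 - β) * Ψ')|
        = (Real.Gamma (1 - β))⁻¹ * |1 * (1 - β) * (x - a) ^ (1 - β - 1) * (∫ s, F x s ∂μ)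
            + (x - a) ^ (1 - β) * Ψ'| := by
          rw [abs_mul, abs_of_nonneg hΓ.le]
      _ ≤ (Real.Gamma (1 - β))⁻¹ * ((1 - β) * (x - a) ^ (1 - β - 1) * |∫ s, F x s ∂μ|
            + (x - a) ^ (1 - β) * |Ψ'|) := by
          apply mul_le_mul_of_nonneg_left _ hΓ.le
          refine (abs_add_le _ _).trans ?_
          apply add_le_add
          · rw [abs_mul, one_mul, abs_mul, abs_of_nonneg (by linarith : (0:ℝ) ≤ 1 - β),
              abs_of_nonneg hP1.le]
          · rw [abs_mul, abs_of_nonneg hP2.le]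
      _ ≤ (Real.Gamma (1 - β))⁻¹ * ((1 - β) * (x - a) ^ (1 - β - 1) * (M * (x - a) * Cκ)
            + (x - a) ^ (1 - β) * (M * Cκ)) := by
          apply mul_le_mul_of_nonneg_left _ hΓ.le
          apply add_le_add
          · exact mul_le_mul_of_nonneg_left hIxb (mul_nonneg (by linarith) hP1.le)
          · exact mul_le_mul_of_nonneg_left hΨ'b hP2.le
      _ = K * (x - a) ^ (1 - β) := by
          rw [hK]
          linear_combination ((Real.Gamma (1 - β))⁻¹ * M * Cκ * (1 - β)) * hpow
  -- conclude
  have hKx : Tendsto (fun x => K * (x - a) ^ (1 - β)) (𝓝[>] a) (𝓝 0) := by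
    have h1 : Tendsto (fun x : ℝ => x - a) (𝓝[>] a) (𝓝 0) := by
      have h : Tendsto (fun x : ℝ => x - a) (𝓝 a) (𝓝 (a - a)) :=
        (continuous_sub_right a).tendsto a
      rw [sub_self] at h
      exact h.mono_left nhdsWithin_le_nhds
    have h2 : ContinuousAt (fun t : ℝ => t ^ (1 - β)) 0 :=
      Real.continuousAt_rpow_const 0 (1 - β) (Or.inr (by linarith))
    have h3 := h2.tendsto.comp h1
    rw [Real.zero_rpow (by norm_num; linarith : (1:ℝ) - β ≠ 0)] at h3
    have h4 := h3.const_mul K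
    simpa using h4
  apply squeeze_zero_norm' ?_ hKx
  filter_upwards [Ioo_mem_nhdsGT_of_mem (Set.left_mem_Ico.2 (by linarith : a < a + δ))]
    with x hx
  rw [Real.norm_eq_abs]
  exact main x hx

/-- For `f(x) = |x|^α` with `0 < β ≤ α < 1`: the left local fractional derivative of order `β`
at base point `a` vanishes whenever `β < α` or `a ≠ 0`, while for base point `0` and `β = α`
one has `lim_{x→0⁺} C_{0⁺}^α f(x) = Γ(α+1)`. -/
theorem caputo_abs_rpow (α β : ℝ) (hβ : 0 < β) (hβα : β ≤ α) (hα : α < 1) :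
    (∀ a : ℝ, (β < α ∨ a ≠ 0) →
      Tendsto (caputo β a (fun x => |x| ^ α)) (𝓝[>] a) (𝓝 0)) ∧
    Tendsto (caputo α 0 (fun x => |x| ^ α)) (𝓝[>] 0) (𝓝 (Real.Gamma (α + 1))) := by
  have hα0 : 0 < α := lt_of_lt_of_le hβ hβα
  have hβ1 : β < 1 := lt_of_le_of_lt hβα hα
  constructor
  · intro a ha
    rcases eq_or_ne a 0 with rfl | hne
    · have hlt : β < α := by
        rcases ha with h | h
        · exact h
        · exact absurd rfl h
      set B := ∫ s in (0:ℝ)..1, s ^ α * (1 - s) ^ (-β) with hB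
      have hev : ∀ᶠ x in 𝓝[>] (0:ℝ), ((Real.Gamma (1 - β))⁻¹ * (B * ((α - β + 1) * x ^ (α - β))))
          = caputo β 0 (fun x => |x| ^ α) x := by
        filter_upwards [self_mem_nhdsWithin] with x hx
        exact (caputo_zero_eq hα0 hx).symm
      have h2 : Tendsto (fun x : ℝ => x ^ (α - β)) (𝓝[>] (0:ℝ)) (𝓝 0) := by
        have hc : ContinuousAt (fun t : ℝ => t ^ (α - β)) 0 :=
          Real.continuousAt_rpow_const 0 _ (Or.inr (by linarith))
        have h3 : Tendsto (fun t : ℝ => t ^ (α - β)) (𝓝[>] (0:ℝ)) (𝓝 ((0:ℝ) ^ (α - β))) :=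
          hc.tendsto.mono_left nhdsWithin_le_nhds
        rwa [Real.zero_rpow (ne_of_gt (by linarith : (0:ℝ) < α - β))] at h3
      have h3 := ((h2.const_mul (α - β + 1)).const_mul B).const_mul (Real.Gamma (1 - β))⁻¹
      simp only [mul_zero] at h3
      exact h3.congr' hev
    · exact caputo_nonzero hα0 hα hβ hβ1 hne
  · have h1α : (0:ℝ) < 1 - α := by linarith
    have hΓne : Real.Gamma (1 - α) ≠ 0 := (Real.Gamma_pos_of_pos h1α).ne'
    have hBeta : (∫ s in (0:ℝ)..1, s ^ α * (1 - s) ^ (-α))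
        = Real.Gamma (α + 1) * Real.Gamma (1 - α) := by
      have h := beta_real (u := α + 1) (v := 1 - α) (by linarith) h1α
      rw [show α + 1 + (1 - α) = 2 by ring, Real.Gamma_two, one_mul,
        show α + 1 - 1 = α by ring, show 1 - α - 1 = -α by ring] at h
      exact h.symm
    have hconst : ∀ᶠ x in 𝓝[>] (0:ℝ), (fun _ : ℝ => Real.Gamma (α + 1)) x
        = caputo α 0 (fun x => |x| ^ α) x := by
      filter_upwards [self_mem_nhdsWithin] with x hx
      rw [caputo_zero_eq hα0 hx, sub_self, Real.rpow_zero, hBeta]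
      field_simp
      ring
    exact tendsto_const_nhds.congr' hconst
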